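/- Let z : ℝⁿ → ℝ be given by z(x) = Σᵢ₌₁ᵏ aᵢ·ReLU(wᵢ·x + bᵢ) + c, where aᵢ, bᵢ, c ∈ ℝ, wᵢ ∈ ℝⁿ, and ReLU(t) = max(t, 0). Fix an index h, and let p₁, p₂ ∈ ℝⁿ satisfy: for every i ≠ h, either (wᵢ·p₁ + bᵢ > 0 and wᵢ·p₂ + bᵢ > 0) or (wᵢ·p₁ + bᵢ < 0 and wᵢ·p₂ + bᵢ < 0); and w_h·p₁ + b_h < 0 while w_h·p₂ + b_h > 0. Then z is differentiable at p₁ and p₂, and the difference of derivatives Dz(p₂) − Dz(p₁) is the linear functional v ↦ a_h·(w_h·v). -/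

import Mathlib

open Matrix

noncomputable def dotCLM {n : ℕ} (w : Fin n → ℝ) : (Fin n → ℝ) →L[ℝ] ℝ :=
  ∑ j, w j • ContinuousLinearMap.proj j

lemma dotCLM_apply {n : ℕ} (w : Fin n → ℝ) (x : Fin n → ℝ) :
    dotCLM w x = dotProduct w x := by
  simp [dotCLM, dotProduct, ContinuousLinearMap.sum_apply]

lemma relu_deriv {n : ℕ} (a : ℝ) (w : Fin n → ℝ) (b : ℝ) (p : Fin n → ℝ)
    (hp : dotProduct w p + b ≠ 0) :
    HasFDerivAt (fun x => a * max (dotProduct w x + b) 0)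
      (if 0 < dotProduct w p + b then a • dotCLM w else 0) p := by
  have hc : Continuous fun x : Fin n → ℝ => dotProduct w x + b := by
    have := (dotCLM w).continuous.add (continuous_const (y := b))
    simpa [dotCLM_apply, Pi.add_def] using this
  rcases lt_or_gt_of_ne hp with hneg | hpos
  · rw [if_neg (not_lt.mpr hneg.le)]
    have hev : (fun x => a * max (dotProduct w x + b) 0) =ᶠ[nhds p] fun _ => 0 := by
      have hopen : IsOpen {x : Fin n → ℝ | dotProduct w x + b < 0} :=
        isOpen_lt hc continuous_const
      filter_upwards [hopen.mem_nhds hneg] with x hx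
      simp [max_eq_right hx.le]
    exact (hasFDerivAt_const (0 : ℝ) p).congr_of_eventuallyEq hev
  · rw [if_pos hpos]
    have hev : (fun x => a * max (dotProduct w x + b) 0) =ᶠ[nhds p]
        fun x => a * (dotProduct w x + b) := by
      have hopen : IsOpen {x : Fin n → ℝ | 0 < dotProduct w x + b} :=
        isOpen_lt continuous_const hc
      filter_upwards [hopen.mem_nhds hpos] with x hx
      simp [max_eq_left hx.le]
    have hlin : HasFDerivAt (fun x => a * (dotProduct w x + b)) (a • dotCLM w) p := by
      have := ((dotCLM w).hasFDerivAt (x := p)).add_const b |>.const_mul a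
      simpa [dotCLM_apply] using this
    exact hlin.congr_of_eventuallyEq hev

lemma z_deriv {n k : ℕ} (a : Fin k → ℝ) (w : Fin k → Fin n → ℝ) (b : Fin k → ℝ) (c : ℝ)
    (z : (Fin n → ℝ) → ℝ)
    (hz : ∀ x, z x = (∑ i, a i * max (dotProduct (w i) x + b i) 0) + c)
    (p : Fin n → ℝ) (hp : ∀ i, dotProduct (w i) p + b i ≠ 0) :
    HasFDerivAt z (∑ i, if 0 < dotProduct (w i) p + b i then a i • dotCLM (w i) else 0) p := by
  have : HasFDerivAt (fun x => (∑ i, a i * max (dotProduct (w i) x + b i) 0) + c)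
      (∑ i, if 0 < dotProduct (w i) p + b i then a i • dotCLM (w i) else 0) p := by
    exact (HasFDerivAt.fun_sum fun i _ => relu_deriv (a i) (w i) (b i) p (hp i)).add_const c
  exact this.congr_of_eventuallyEq (Filter.Eventually.of_forall hz)

theorem gradient_jump_across_boundary
    (n k : ℕ) (a : Fin k → ℝ) (w : Fin k → Fin n → ℝ) (b : Fin k → ℝ) (c : ℝ)
    (z : (Fin n → ℝ) → ℝ)
    (hz : ∀ x, z x = (∑ i, a i * max (dotProduct (w i) x + b i) 0) + c)
    (h : Fin k) (p₁ p₂ : Fin n → ℝ)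
    (hsame : ∀ i, i ≠ h →
      (0 < dotProduct (w i) p₁ + b i ∧ 0 < dotProduct (w i) p₂ + b i) ∨
      (dotProduct (w i) p₁ + b i < 0 ∧ dotProduct (w i) p₂ + b i < 0))
    (h1 : dotProduct (w h) p₁ + b h < 0)
    (h2 : 0 < dotProduct (w h) p₂ + b h) :
    DifferentiableAt ℝ z p₁ ∧ DifferentiableAt ℝ z p₂ ∧
      ∀ v : Fin n → ℝ,
        fderiv ℝ z p₂ v - fderiv ℝ z p₁ v = a h * dotProduct (w h) v := by
  have hp1 : ∀ i, dotProduct (w i) p₁ + b i ≠ 0 := by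
    intro i
    by_cases hi : i = h
    · subst hi; exact h1.ne
    · rcases hsame i hi with ⟨h', _⟩ | ⟨h', _⟩
      · exact h'.ne'
      · exact h'.ne
  have hp2 : ∀ i, dotProduct (w i) p₂ + b i ≠ 0 := by
    intro i
    by_cases hi : i = h
    · subst hi; exact h2.ne'
    · rcases hsame i hi with ⟨_, h'⟩ | ⟨_, h'⟩
      · exact h'.ne'
      · exact h'.ne
  have hd1 := z_deriv a w b c z hz p₁ hp1
  have hd2 := z_deriv a w b c z hz p₂ hp2
  refine ⟨hd1.differentiableAt, hd2.differentiableAt, fun v => ?_⟩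
  rw [hd1.fderiv, hd2.fderiv]
  simp only [ContinuousLinearMap.sum_apply]
  rw [← Finset.sum_sub_distrib]
  rw [Finset.sum_eq_single h]
  · rw [if_pos h2, if_neg (not_lt.mpr h1.le)]
    simp [dotCLM_apply]
  · intro i _ hi
    rcases hsame i hi with ⟨ha, hb⟩ | ⟨ha, hb⟩
    · rw [if_pos ha, if_pos hb]; ring
    · rw [if_neg (not_lt.mpr ha.le), if_neg (not_lt.mpr hb.le)]; simp
  · intro hh; exact absurd (Finset.mem_univ h) hh
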